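/- Let H be a Hopf algebra with antipode S, p ∈ H primitive, x ∈ H with ε(x) = 0, and ⊤ a natural growth operation satisfying Δ(x ⊤ p) = x ⊗ p + x ⊤ p ⊗ 1 + 1 ⊗ (x ⊤ p) + Σ_{(x)} x^{(1)} ⊗ (x^{(2)} ⊤ p) where Δ̃(x) = Σ x^{(1)} ⊗ x^{(2)}. Then S(x ⊤ p) = −x ⊤ p − S(x)p − Σ_{(x)} S(x^{(1)})(x^{(2)} ⊤ p). -/

import Mathlib

open scoped TensorProduct

section

variable {H : Type*} [CommRing H] [HopfAlgebra ℚ H]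

/-- The reduced coproduct `Δ̃(x) = Δ(x) − 1 ⊗ x − x ⊗ 1`. -/
noncomputable def rcomul (x : H) : H ⊗[ℚ] H :=
  Coalgebra.comul x - 1 ⊗ₜ[ℚ] x - x ⊗ₜ[ℚ] 1

/-- Let `H` be a Hopf algebra with antipode `S`, `p ∈ H` primitive, `x ∈ H` with
`ε(x) = 0`, and `⊤ = t` a bilinear natural growth operation satisfying
`Δ(x ⊤ p) = x ⊗ p + (x ⊤ p) ⊗ 1 + 1 ⊗ (x ⊤ p) + Σ_{(x)} x⁽¹⁾ ⊗ (x⁽²⁾ ⊤ p)`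
(the Sweedler sum being over the reduced coproduct of `x`).  Then
`S(x ⊤ p) = −(x ⊤ p) − S(x)·p − Σ_{(x)} S(x⁽¹⁾)·(x⁽²⁾ ⊤ p)`. -/
theorem antipode_natural_growth
    (t : H →ₗ[ℚ] H →ₗ[ℚ] H) (p x : H)
    (hp : (Coalgebra.comul p : H ⊗[ℚ] H) = p ⊗ₜ[ℚ] 1 + 1 ⊗ₜ[ℚ] p)
    (hx : Coalgebra.counit (R := ℚ) x = 0)
    (hgrowth :
      (Coalgebra.comul (t x p) : H ⊗[ℚ] H)
        = x ⊗ₜ[ℚ] p + (t x p) ⊗ₜ[ℚ] 1 + 1 ⊗ₜ[ℚ] (t x p)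
          + LinearMap.lTensor H (t.flip p) (rcomul x)) :
    HopfAlgebra.antipode (R := ℚ) (t x p)
      = -(t x p) - (HopfAlgebra.antipode (R := ℚ) x) * p
        - LinearMap.mul' ℚ H
            ((TensorProduct.map (HopfAlgebra.antipode (R := ℚ)) (t.flip p))
              (rcomul x)) := by
  set S := HopfAlgebra.antipode (R := ℚ) (A := H) with hSdef
  have hS1 : S 1 = 1 := by
    have := HopfAlgebra.mul_antipode_rTensor_comul_apply (R := ℚ) (A := H) 1
    exact HopfAlgebra.antipode_one
  have hcz : (algebraMap ℚ H) (Coalgebra.counit (R := ℚ) (t x p)) = 0 := by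
    have h := congrArg (LinearMap.rTensor H (Coalgebra.counit (R := ℚ) (A := H))) hgrowth
    rw [Coalgebra.rTensor_counit_comul] at h
    have hr : LinearMap.rTensor H (Coalgebra.counit (R := ℚ) (A := H))
        (LinearMap.lTensor H (t.flip p) (rcomul x)) = 0 := by
      have hc : LinearMap.rTensor H (Coalgebra.counit (R := ℚ) (A := H)) (rcomul x) = 0 := by
        simp [rcomul, map_sub, Coalgebra.rTensor_counit_comul, hx]
      calc LinearMap.rTensor H (Coalgebra.counit (R := ℚ) (A := H))
            (LinearMap.lTensor H (t.flip p) (rcomul x))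
          = LinearMap.lTensor ℚ (t.flip p)
            (LinearMap.rTensor H (Coalgebra.counit (R := ℚ) (A := H)) (rcomul x)) := by
            rw [← LinearMap.comp_apply, ← LinearMap.comp_apply,
              LinearMap.rTensor_comp_lTensor, LinearMap.lTensor_comp_rTensor]
        _ = 0 := by rw [hc, map_zero]
    simp only [map_add, LinearMap.rTensor_tmul, hx, hr, add_zero,
      TensorProduct.zero_tmul, zero_add, Bialgebra.counit_one] at h
    have h2 : (Coalgebra.counit (R := ℚ) (t x p)) ⊗ₜ[ℚ] (1 : H) = 0 :=
      right_eq_add.mp h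
    have h3 : Coalgebra.counit (R := ℚ) (t x p) • (1 : H) = 0 := by
      have h4 := congrArg (TensorProduct.lid ℚ H) h2
      rwa [LinearEquiv.map_zero, TensorProduct.lid_tmul] at h4
    rwa [Algebra.algebraMap_eq_smul_one]
  have K := HopfAlgebra.mul_antipode_rTensor_comul_apply (R := ℚ) (A := H) (t x p)
  rw [hgrowth] at K
  have hmap : LinearMap.rTensor H S (LinearMap.lTensor H (t.flip p) (rcomul x))
      = TensorProduct.map S (t.flip p) (rcomul x) := by
    rw [← LinearMap.comp_apply, LinearMap.rTensor_comp_lTensor]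
  rw [map_add, map_add, map_add, hmap] at K
  simp only [LinearMap.rTensor_tmul, map_add, LinearMap.mul'_apply, hS1, HopfAlgebra.antipode_one, one_mul,
    mul_one, hcz] at K
  linear_combination K


end
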